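/- Let S be a preordered abelian monoid and y ∈ S with y ≠ 0. Then y is paradoxical if and only if ⟨y⟩ = {x ∈ S : x <_s y}. -/
import Mathlib


/-- A nonzero element `y` of a preordered abelian monoid is paradoxical if and only if
`⟨y⟩ = {x | x <ₛ y}`, where `x <ₛ y` means `(n+1) • x ≤ n • y` for some `n ≥ 1`. -/
theorem stmt4 {S : Type*} [AddCommMonoid S] [Preorder S]
    (hzero : ∀ x : S, 0 ≤ x)
    (hadd : ∀ x y z : S, x ≤ y → x + z ≤ y + z)
    (y : S) (hy : y ≠ 0) :
    (∃ n : ℕ, 1 ≤ n ∧ (n + 1) • y ≤ n • y) ↔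
      {x : S | ∃ n : ℕ, x ≤ n • y} =
        {x : S | ∃ n : ℕ, 1 ≤ n ∧ (n + 1) • x ≤ n • y} := by
  have smul_mono : ∀ (k : ℕ) (a b : S), a ≤ b → k • a ≤ k • b := by
    intro k a b h
    induction k with
    | zero => simp
    | succ k ih =>
      rw [succ_nsmul, succ_nsmul]
      calc k • a + a ≤ k • a + b := by
            rw [add_comm (k • a) a, add_comm (k • a) b]; exact hadd _ _ _ h
        _ ≤ k • b + b := hadd _ _ _ ih
  constructor
  · rintro ⟨n, hn, hkey⟩
    have hdec : ∀ j : ℕ, (n + j) • y ≤ n • y := by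
      intro j
      induction j with
      | zero => simp
      | succ j ih =>
        have he : (n + (j + 1)) • y = (n + 1) • y + j • y := by
          rw [← add_nsmul]; ring_nf
        rw [he]
        calc (n + 1) • y + j • y ≤ n • y + j • y := hadd _ _ _ hkey
          _ = (n + j) • y := (add_nsmul y n j).symm
          _ ≤ n • y := ih
    ext x
    simp only [Set.mem_setOf_eq]
    constructor
    · rintro ⟨m, hm⟩
      refine ⟨n, hn, ?_⟩
      have h1 : (n + 1) • x ≤ (n + 1) • (m • y) := smul_mono _ _ _ hm
      have h2 : (n + 1) • (m • y) = ((n + 1) * m) • y := (mul_nsmul' y (n+1) m).symm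
      rcases Nat.eq_zero_or_pos m with hm0 | hm1
      · subst hm0
        calc (n + 1) • x ≤ (n + 1) • ((0 : ℕ) • y) := h1
          _ = 0 := by simp
          _ ≤ n • y := hzero _
      · have hge : n ≤ (n + 1) * m := le_trans (Nat.le_succ n) (Nat.le_mul_of_pos_right _ hm1)
        obtain ⟨j, hj⟩ := Nat.exists_eq_add_of_le hge
        calc (n + 1) • x ≤ ((n + 1) * m) • y := by rw [← h2]; exact h1
          _ = (n + j) • y := by rw [hj]
          _ ≤ n • y := hdec j
    · rintro ⟨k, hk1, hk⟩
      refine ⟨k, ?_⟩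
      calc x = 0 + x := (zero_add x).symm
        _ ≤ k • x + x := hadd _ _ _ (hzero _)
        _ = (k + 1) • x := (succ_nsmul x k).symm
        _ ≤ k • y := hk
  · intro h
    have hy1 : y ∈ {x : S | ∃ n : ℕ, x ≤ n • y} := ⟨1, by simp⟩
    rw [h] at hy1
    exact hy1
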